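/- For every real constant c > 0 there exist real numbers k₃, k₄, k₅ such that both the 3×3 matrix Y(k₃,k₄,k₅,c) and the 3×3 matrix Z(k₃,k₄,k₅) are (symmetric) positive definite. -/

import Mathlib

open Matrix

lemma posdef3 (A B C D E F : ℝ) (h1 : 0 < A) (h2 : 0 < A*D - B^2)
    (h3 : 0 < A*(D*F - E^2) - B*(B*F - E*C) + C*(B*E - D*C)) :
    (!![A, B, C; B, D, E; C, E, F] : Matrix (Fin 3) (Fin 3) ℝ).PosDef := by
  have main : ∀ x0 x1 x2 : ℝ, (x0 ≠ 0 ∨ x1 ≠ 0 ∨ x2 ≠ 0) →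
      0 < x0 * (A * x0 + B * x1 + C * x2) + x1 * (B * x0 + D * x1 + E * x2) +
        x2 * (C * x0 + E * x1 + F * x2) := by
    intro x0 x1 x2 hx'
    have key : A * (A*D - B^2) *
        (x0 * (A * x0 + B * x1 + C * x2) + x1 * (B * x0 + D * x1 + E * x2) +
          x2 * (C * x0 + E * x1 + F * x2))
        = (A*D - B^2) * (A*x0 + B*x1 + C*x2)^2
          + ((A*D - B^2)*x1 + (A*E - B*C)*x2)^2
          + (A * (A*(D*F - E^2) - B*(B*F - E*C) + C*(B*E - D*C))) * x2^2 := by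
      ring
    have hpos : 0 < A * (A*D - B^2) *
        (x0 * (A * x0 + B * x1 + C * x2) + x1 * (B * x0 + D * x1 + E * x2) +
          x2 * (C * x0 + E * x1 + F * x2)) := by
      rw [key]
      have hAd := mul_pos h1 h3
      rcases eq_or_ne x2 0 with rfl | hz
      · rcases eq_or_ne x1 0 with rfl | hy
        · have h0 : x0 ≠ 0 := by tauto
          have : A * x0 ≠ 0 := mul_ne_zero (ne_of_gt h1) h0
          have hsq : 0 < (A*x0 + B*0 + C*0)^2 := by
            have : A*x0 + B*0 + C*0 ≠ 0 := by simpa using ‹A * x0 ≠ 0›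
            positivity
          nlinarith [sq_nonneg ((A*D - B^2)*(0:ℝ) + (A*E - B*C)*0)]
        · have : (A*D - B^2) * x1 ≠ 0 := mul_ne_zero (ne_of_gt h2) hy
          have hsq : 0 < ((A*D - B^2)*x1 + (A*E - B*C)*0)^2 := by
            have : (A*D - B^2)*x1 + (A*E - B*C)*0 ≠ 0 := by simpa using ‹(A*D - B^2) * x1 ≠ 0›
            positivity
          nlinarith [sq_nonneg (A*x0 + B*x1 + C*0)]
      · have hsq : 0 < (A * (A*(D*F - E^2) - B*(B*F - E*C) + C*(B*E - D*C))) * x2^2 := by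
          positivity
        nlinarith [sq_nonneg (A*x0 + B*x1 + C*x2), sq_nonneg ((A*D - B^2)*x1 + (A*E - B*C)*x2)]
    nlinarith [mul_pos h1 h2, hpos]
  rw [posDef_iff_dotProduct_mulVec]
  constructor
  · ext i j
    fin_cases i <;> fin_cases j <;> simp [Matrix.conjTranspose_apply]
  · intro x hx
    have hx' : x 0 ≠ 0 ∨ x 1 ≠ 0 ∨ x 2 ≠ 0 := by
      by_contra h
      push_neg at h
      exact hx (funext fun i => by fin_cases i <;> simp [h.1, h.2.1, h.2.2])
    simpa [Matrix.mulVec, dotProduct, Fin.sum_univ_three] using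
      main (x 0) (x 1) (x 2) hx'

/-- The 3×3 symmetric matrix `Y(k₃,k₄,k₅,c)` from the paper. -/
noncomputable def Ymat (k3 k4 k5 c : ℝ) : Matrix (Fin 3) (Fin 3) ℝ :=
  !![2*k3^2 - 2*k4 - k5^2, k3*k4 - k3*k5^2,            -(k3*k5);
     k3*k4 - k3*k5^2,      2*k4^2 - 2*k3*k5 - k3^2*k5^2, -(k4*k5);
     -(k3*k5),             -(k4*k5),                     2*k5^2 - c^2]

/-- The 3×3 symmetric matrix `Z(k₃,k₄,k₅)` from the paper. -/
noncomputable def Zmat (k3 k4 k5 : ℝ) : Matrix (Fin 3) (Fin 3) ℝ :=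
  !![k3,  k4,        -k5;
     k4,  k3*k4 - k5, -(k3*k5);
     -k5, -(k3*k5),   k4*k5]

/-- For every real constant `c > 0` there exist `k₃, k₄, k₅` such that both
`Y(k₃,k₄,k₅,c)` and `Z(k₃,k₄,k₅)` are positive definite. -/
theorem stmt0 (c : ℝ) (hc : 0 < c) :
    ∃ k3 k4 k5 : ℝ, (Ymat k3 k4 k5 c).PosDef ∧ (Zmat k3 k4 k5).PosDef := by
  have hc0 : c ≠ 0 := ne_of_gt hc
  refine ⟨10*c + 10/c, 20*c^2 + 20, c, ?_, ?_⟩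
  · unfold Ymat
    apply posdef3
    · have h : 2*(10*c + 10/c)^2 - 2*(20*c^2 + 20) - c^2
          = 159*c^2 + 360 + 200/c^2 := by field_simp; ring
      rw [h]; positivity
    · have h : (2*(10*c + 10/c)^2 - 2*(20*c^2 + 20) - c^2) *
            (2*(20*c^2 + 20)^2 - 2*(10*c + 10/c)*c - (10*c + 10/c)^2*c^2) -
            ((10*c + 10/c)*(20*c^2 + 20) - (10*c + 10/c)*c^2)^2
          = 75200*c^6 + 323220*c^4 + 516820*c^2 + 364800 + 96000/c^2 := by
        field_simp; ring
      rw [h]; positivity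
    · have h : (2*(10*c + 10/c)^2 - 2*(20*c^2 + 20) - c^2) *
            ((2*(20*c^2 + 20)^2 - 2*(10*c + 10/c)*c - (10*c + 10/c)^2*c^2)*(2*c^2 - c^2)
              - (-((20*c^2 + 20)*c))^2) -
            ((10*c + 10/c)*(20*c^2 + 20) - (10*c + 10/c)*c^2) *
            (((10*c + 10/c)*(20*c^2 + 20) - (10*c + 10/c)*c^2)*(2*c^2 - c^2)
              - (-((20*c^2 + 20)*c))*(-((10*c + 10/c)*c))) +
            (-((10*c + 10/c)*c)) *
            (((10*c + 10/c)*(20*c^2 + 20) - (10*c + 10/c)*c^2)*(-((20*c^2 + 20)*c))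
              - (2*(20*c^2 + 20)^2 - 2*(10*c + 10/c)*c - (10*c + 10/c)^2*c^2)*(-((10*c + 10/c)*c)))
          = 17600*c^8 + 82020*c^6 + 139220*c^4 + 102800*c^2 + 28000 := by
        field_simp; ring
      rw [h]; positivity
  · unfold Zmat
    apply posdef3
    · positivity
    · have h : (10*c + 10/c) * ((10*c + 10/c)*(20*c^2 + 20) - c) - (20*c^2 + 20)^2
          = 1600*c^4 + 5190*c^2 + 5590 + 2000/c^2 := by field_simp; ring
      rw [h]; positivity
    · have h : (10*c + 10/c) * (((10*c + 10/c)*(20*c^2 + 20) - c)*((20*c^2 + 20)*c)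
              - (-((10*c + 10/c)*c))^2) -
            (20*c^2 + 20) * ((20*c^2 + 20)*((20*c^2 + 20)*c)
              - (-((10*c + 10/c)*c))*(-c)) +
            (-c) * ((20*c^2 + 20)*(-((10*c + 10/c)*c))
              - ((10*c + 10/c)*(20*c^2 + 20) - c)*(-c))
          = 32000*c^7 + 135000*c^5 + 213001*c^3 + 149000*c + 39000/c := by
        field_simp; ring
      rw [h]; positivity
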